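/- Let 𝒦 be a closure system on a finite set E, let X ⊆ E and let e ∈ X. Then e ∈ ex(X) if and only if there exists no rooted circuit (A, e) of 𝒦 with A ⊆ X. -/

import Mathlib

open Set

variable {α : Type*}

/-- A closure system on a ground set `E`: a family of subsets of `E` containing `E`
and closed under pairwise intersection. -/
def IsClosureSystem (E : Set α) (K : Set (Set α)) : Prop :=
  (∀ A ∈ K, A ⊆ E) ∧ E ∈ K ∧ ∀ A ∈ K, ∀ B ∈ K, A ∩ B ∈ K

/-- The closure operator `τ(X) = ⋂ {A ∈ K : X ⊆ A}`. -/
def closureOp (K : Set (Set α)) (X : Set α) : Set α :=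
  ⋂₀ {A | A ∈ K ∧ X ⊆ A}

/-- The extreme operator `ex(X) = {x ∈ X : x ∉ τ(X \ {x})}`. -/
def extremeOp (K : Set (Set α)) (X : Set α) : Set α :=
  {x | x ∈ X ∧ x ∉ closureOp K (X \ {x})}

/-- A rooted circuit `(X, e)` of a closure system `K` on ground set `E`:
`e ∉ X` and `X` is minimal under inclusion with `e ∈ τ(X)`. -/
def IsRootedCircuit (E : Set α) (K : Set (Set α)) (X : Set α) (e : α) : Prop :=
  X ⊆ E ∧ e ∈ E ∧ e ∉ X ∧ e ∈ closureOp K X ∧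
    ∀ Y ⊆ X, e ∈ closureOp K Y → Y = X

/-- A convex geometry: a closure system in which every nonempty closed set has a
nonempty extreme set. -/
def IsConvexGeometry (E : Set α) (K : Set (Set α)) : Prop :=
  IsClosureSystem E K ∧ ∀ X ∈ K, X.Nonempty → (extremeOp K X).Nonempty

/-- A convex geometry has stem size 2 if every rooted circuit has stem of size 2. -/
def StemSize2 (E : Set α) (K : Set (Set α)) : Prop :=
  ∀ X e, IsRootedCircuit E K X e → X.ncard = 2

theorem stmt0 (E : Set α) (hE : E.Finite) (K : Set (Set α))
    (hK : IsClosureSystem E K) (X : Set α) (hX : X ⊆ E) (e : α) (he : e ∈ X) :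
    e ∈ extremeOp K X ↔ ¬ ∃ A : Set α, A ⊆ X ∧ IsRootedCircuit E K A e := by
  have mono : ∀ Y Z : Set α, Y ⊆ Z → closureOp K Y ⊆ closureOp K Z := by
    intro Y Z hYZ x hx
    simp only [closureOp, mem_sInter, mem_setOf_eq] at hx ⊢
    exact fun A hA => hx A ⟨hA.1, hYZ.trans hA.2⟩
  constructor
  · intro hex hcirc
    obtain ⟨A, hAX, hA⟩ := hcirc
    exact hex.2 (mono A (X \ {e}) (fun a ha => ⟨hAX ha, fun h => hA.2.2.1 (h ▸ ha)⟩) hA.2.2.2.1)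
  · intro h
    refine ⟨he, fun hc => h ?_⟩
    set S : Set (Set α) := {Y | Y ⊆ X \ {e} ∧ e ∈ closureOp K Y} with hS
    have hfin : S.Finite := by
      apply Set.Finite.subset (hE.subset hX).finite_subsets
      intro Y hY
      exact hY.1.trans (diff_subset)
    have hne : S.Nonempty := ⟨X \ {e}, Subset.rfl, hc⟩
    obtain ⟨A, hAS, hmin⟩ := hfin.exists_minimal hne
    refine ⟨A, hAS.1.trans diff_subset, (hAS.1.trans diff_subset).trans hX, hX he,
      fun h => (hAS.1 h).2 rfl, hAS.2, fun Y hYA hY => ?_⟩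
    exact hYA.antisymm (hmin (y := Y) ⟨hYA.trans hAS.1, hY⟩ hYA)
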